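/- arXiv:1610.00951 — 3 statements merged into one kernel-verified Lean document; each statement's English description precedes it below -/
import Mathlib

section
/- Let $\mathscr{K}$ be a positive self-adjoint trace-class operator on $\mathcal{H}$ with eigenvalues $\lambda_j$ satisfying $c j^{-\alpha} \le \lambda_j \le C j^{-\alpha}$ for all large $j$ with $\alpha > 1$, and let $\beta \in \mathcal{H}$ satisfy $|\langle\beta,\phi_j\rangle| \le d j^{-\eta}$ for all large $j$ with $\eta > 1/2$. Then as $\rho \downarrow 0$, the squared Tikhonov bias satisfies $\rho^2 \sum_{j\ge1} (\lambda_j+\rho)^{-2}\langle\beta,\phi_j\rangle^2 = O(\rho^m)$, where $m = (2\eta-1)/\alpha$ if $\alpha > \eta - 1/2$ and $m = 2$ if $\alpha < \eta - 1/2$. -/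
open Finset in
/-- Partial sums of the tail `∑_{i<n} (J+1+i)^(-p)` are bounded by `J^(1-p)/(p-1)`. -/
lemma tailSum (p : ℝ) (hp : 1 < p) (J : ℕ) (hJ : 1 ≤ J) (n : ℕ) :
    ∑ i ∈ Finset.range n, ((J : ℝ) + 1 + i) ^ (-p) ≤ (1/(p-1)) * (J:ℝ) ^ (1-p) := by
  have hJpos : (0:ℝ) < J := by exact_mod_cast hJ
  have hanti : AntitoneOn (fun x : ℝ => x ^ (-p)) (Set.Icc (J:ℝ) ((J:ℝ) + n)) := by
    intro x hx y hy hxy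
    exact Real.rpow_le_rpow_of_nonpos (lt_of_lt_of_le hJpos hx.1) hxy (by linarith)
  have h1 : ∑ i ∈ Finset.range n, ((J:ℝ) + (i+1:ℕ)) ^ (-p)
      ≤ ∫ x in (J:ℝ)..((J:ℝ) + n), x ^ (-p) := hanti.sum_le_integral
  have h2 : (∫ x in (J:ℝ)..((J:ℝ) + n), x ^ (-p))
      = (((J:ℝ)+n) ^ (-p+1) - (J:ℝ) ^ (-p+1)) / (-p+1) := by
    apply integral_rpow
    right
    constructor
    · intro h; linarith
    · intro h
      rcases Set.mem_uIcc.1 h with ⟨h1, _⟩ | ⟨_, h2⟩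
      · linarith
      · have : (0:ℝ) ≤ (n:ℝ) := Nat.cast_nonneg n
        linarith
  have h3 : (((J:ℝ)+n) ^ (-p+1) - (J:ℝ) ^ (-p+1)) / (-p+1) ≤ (1/(p-1)) * (J:ℝ) ^ (1-p) := by
    have hJn : (0:ℝ) < (J:ℝ) + n := by positivity
    have hb : ((J:ℝ)) ^ (-p+1) ≥ ((J:ℝ)+n) ^ (-p+1) :=
      Real.rpow_le_rpow_of_nonpos hJpos (by linarith [Nat.cast_nonneg (α := ℝ) n]) (by linarith)
    have hpos : (0:ℝ) < ((J:ℝ)+n) ^ (-p+1) := Real.rpow_pos_of_pos hJn _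
    rw [div_le_iff_of_neg (by linarith : -p+1 < 0)]
    have : (1:ℝ)-p = -p+1 := by ring
    have hne : p - 1 ≠ 0 := by linarith
    have key : (1/(p-1)) * (J:ℝ)^(1-p) * (-p+1) = -((J:ℝ)^(-p+1)) := by
      rw [this]; field_simp; ring
    rw [key]
    linarith
  calc ∑ i ∈ Finset.range n, ((J : ℝ) + 1 + i) ^ (-p)
      = ∑ i ∈ Finset.range n, ((J:ℝ) + (i+1:ℕ)) ^ (-p) := by
        apply Finset.sum_congr rfl; intro i _; push_cast; ring_nf
    _ ≤ _ := le_trans h1 (le_of_eq h2)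
    _ ≤ _ := h3

/-- Head sums: `∑_{j<J} (j+1)^s ≤ (1 + 1/(s+1)) J^(s+1)` for `s > -1`. -/
lemma headSum (s : ℝ) (hs : -1 < s) (J : ℕ) (hJ : 1 ≤ J) :
    ∑ j ∈ Finset.range J, ((j:ℝ)+1) ^ s ≤ (1 + 1/(s+1)) * (J:ℝ) ^ (s+1) := by
  have hs1 : (0:ℝ) < s + 1 := by linarith
  have hJpos : (0:ℝ) < J := by exact_mod_cast hJ
  have hJ1 : (1:ℝ) ≤ (J:ℝ) := by exact_mod_cast hJ
  have hJs1 : (1:ℝ) ≤ (J:ℝ) ^ (s+1) := by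
    calc (1:ℝ) = (1:ℝ) ^ (s+1) := (Real.one_rpow _).symm
    _ ≤ (J:ℝ) ^ (s+1) := Real.rpow_le_rpow zero_le_one hJ1 hs1.le
  rcases le_or_gt 0 s with hs0 | hs0
  · -- s ≥ 0 : bound each term by J^s
    calc ∑ j ∈ Finset.range J, ((j:ℝ)+1) ^ s
        ≤ ∑ _j ∈ Finset.range J, (J:ℝ) ^ s := by
          apply Finset.sum_le_sum
          intro j hj
          apply Real.rpow_le_rpow (by positivity) _ hs0
          have := Finset.mem_range.1 hj
          have : (j:ℝ) + 1 ≤ (J:ℝ) := by exact_mod_cast this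
          exact this
      _ = (J:ℝ) * (J:ℝ) ^ s := by rw [Finset.sum_const, Finset.card_range]; ring
      _ = (J:ℝ) ^ (s+1) := by
          rw [Real.rpow_add hJpos, Real.rpow_one]; ring
      _ ≤ (1 + 1/(s+1)) * (J:ℝ) ^ (s+1) := by
          have : (0:ℝ) < 1/(s+1) := by positivity
          nlinarith
  · -- -1 < s < 0 : integral comparison
    obtain ⟨K, rfl⟩ : ∃ K, J = K + 1 := ⟨J - 1, (Nat.succ_pred_eq_of_pos hJ).symm⟩
    have hK0 : (0:ℝ) ≤ (K:ℝ) := Nat.cast_nonneg K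
    have hanti : AntitoneOn (fun x : ℝ => x ^ s) (Set.Icc (1:ℝ) ((1:ℝ) + K)) := by
      intro x hx y hy hxy
      exact Real.rpow_le_rpow_of_nonpos (lt_of_lt_of_le one_pos hx.1) hxy hs0.le
    have h1 : ∑ i ∈ Finset.range K, ((1:ℝ) + (i+1:ℕ)) ^ s
        ≤ ∫ x in (1:ℝ)..((1:ℝ) + K), x ^ s := hanti.sum_le_integral
    have h2 : (∫ x in (1:ℝ)..((1:ℝ) + K), x ^ s)
        = (((1:ℝ)+K) ^ (s+1) - 1) / (s+1) := by
      rw [integral_rpow (Or.inl hs), Real.one_rpow]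
    rw [h2] at h1
    have hJs1' : (1:ℝ) ≤ ((1:ℝ)+K) ^ (s+1) := by
      calc (1:ℝ) = (1:ℝ) ^ (s+1) := (Real.one_rpow _).symm
      _ ≤ ((1:ℝ)+K) ^ (s+1) :=
          Real.rpow_le_rpow zero_le_one (by linarith) hs1.le
    have hstep : (((1:ℝ)+K) ^ (s+1) - 1)/(s+1) + 1 ≤ (1+1/(s+1)) * ((1:ℝ)+K) ^ (s+1) := by
      have e1 : ((1:ℝ)+1/(s+1)) * ((1:ℝ)+K) ^ (s+1)
          = ((1:ℝ)+K) ^ (s+1) + (((1:ℝ)+K) ^ (s+1))/(s+1) := by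
        field_simp
      rw [e1]
      have h3 : (((1:ℝ)+K) ^ (s+1) - 1)/(s+1) ≤ (((1:ℝ)+K) ^ (s+1))/(s+1) :=
        (div_le_div_iff_of_pos_right hs1).2 (by linarith)
      linarith
    have heq : ∑ i ∈ Finset.range K, ((1:ℝ) + (i+1:ℕ)) ^ s
        = ∑ i ∈ Finset.range K, (((i+1:ℕ):ℝ)+1) ^ s := by
      apply Finset.sum_congr rfl; intro i _; ring_nf
    rw [Finset.sum_range_succ']
    have hfin : ((K:ℝ)+1) = ((1:ℝ)+K) := by ring
    push_cast
    rw [hfin]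
    rw [heq] at h1
    norm_num
    have : ((0:ℝ)+1) ^ s = 1 := by norm_num [Real.one_rpow]
    push_cast at h1 ⊢
    rw [one_div] at hstep
    linarith [h1, hstep]

set_option maxHeartbeats 1000000 in
/-- rate of the squared Tikhonov bias
`ρ² ∑ (λ_j+ρ)⁻² ⟨β,φ_j⟩² = O(ρ^m)` as `ρ ↓ 0`, where the Fourier
coefficients are abstracted as the sequence `bcoef`. -/
theorem stmt5 (lam bcoef : ℕ → ℝ) (α η cl cu d m : ℝ)
    (hα : 1 < α) (hη : 1/2 < η) (hcl : 0 < cl) (hclu : cl < cu) (hd : 0 < d)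
    (hpos : ∀ j : ℕ, 1 ≤ j → 0 < lam j)
    (hlam : ∃ N : ℕ, ∀ j : ℕ, N ≤ j →
      cl * (j:ℝ) ^ (-α) ≤ lam j ∧ lam j ≤ cu * (j:ℝ) ^ (-α))
    (hb : ∃ N : ℕ, ∀ j : ℕ, N ≤ j → |bcoef j| ≤ d * (j:ℝ) ^ (-η))
    (hm : (η - 1/2 < α ∧ m = (2*η - 1)/α) ∨ (α < η - 1/2 ∧ m = 2)) :
    ∃ K > (0:ℝ), ∃ ρ0 > (0:ℝ), ∀ ρ : ℝ, 0 < ρ → ρ < ρ0 →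
      ρ ^ 2 * (∑' j : ℕ, ((lam (j+1) + ρ)⁻¹) ^ 2 * (bcoef (j+1)) ^ 2)
        ≤ K * ρ ^ m := by
  obtain ⟨N1, hN1⟩ := hlam
  obtain ⟨N2, hN2⟩ := hb
  set N : ℕ := max (max N1 N2) 1 with hNdef
  have hN1le : N1 ≤ N := le_trans (le_max_left _ _) (le_max_left _ _)
  have hN2le : N2 ≤ N := le_trans (le_max_right _ _) (le_max_left _ _)
  have hN1' : 1 ≤ N := le_max_right _ _
  have hα0 : (0:ℝ) < α := by linarith
  have hη1 : (1:ℝ) < 2*η := by linarith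
  set A : ℝ := (cl⁻¹)^2 * d^2 with hA
  have hA0 : 0 < A := by positivity
  set s : ℝ := 2*α - 2*η with hsdef
  set g : ℕ → ℝ := fun j => ((lam (j+1))⁻¹) ^ 2 * (bcoef (j+1)) ^ 2 with hg
  set B : ℝ := ∑ j ∈ Finset.range N, g j with hB
  have hgnn : ∀ j, 0 ≤ g j := fun j => by positivity
  have hB0 : 0 ≤ B := Finset.sum_nonneg fun j _ => hgnn j
  -- termwise bound for f by g (any ρ > 0)
  have hfg : ∀ ρ : ℝ, 0 < ρ → ∀ j : ℕ,
      ((lam (j+1) + ρ)⁻¹) ^ 2 * (bcoef (j+1)) ^ 2 ≤ g j := by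
    intro ρ hρ j
    have hlp : 0 < lam (j+1) := hpos (j+1) (by omega)
    have h1 : (lam (j+1) + ρ)⁻¹ ≤ (lam (j+1))⁻¹ := by
      apply inv_anti₀ hlp (by linarith)
    have h2 : 0 ≤ (lam (j+1) + ρ)⁻¹ := by positivity
    have := pow_le_pow_left₀ h2 h1 2
    exact mul_le_mul_of_nonneg_right this (by positivity)
  have hfnn : ∀ ρ : ℝ, ∀ j : ℕ,
      0 ≤ ((lam (j+1) + ρ)⁻¹) ^ 2 * (bcoef (j+1)) ^ 2 := fun ρ j => by positivity
  -- the key decay estimates beyond N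
  have keyb : ∀ j : ℕ, N ≤ j → (bcoef (j+1)) ^ 2 ≤ d^2 * ((j:ℝ)+1) ^ (-(2*η)) := by
    intro j hj
    have hxpos : (0:ℝ) < (j:ℝ)+1 := by positivity
    have hbb := hN2 (j+1) (by omega)
    have hxcast : ((j+1:ℕ):ℝ) = (j:ℝ)+1 := by push_cast; ring
    rw [hxcast] at hbb
    have hrn : (0:ℝ) ≤ d * ((j:ℝ)+1) ^ (-η) := by positivity
    calc (bcoef (j+1))^2 = |bcoef (j+1)|^2 := (sq_abs _).symm
      _ ≤ (d * ((j:ℝ)+1) ^ (-η))^2 := pow_le_pow_left₀ (abs_nonneg _) hbb 2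
      _ = d^2 * ((j:ℝ)+1) ^ (-(2*η)) := by
          rw [mul_pow, ← Real.rpow_natCast (((j:ℝ)+1) ^ (-η)) 2, ← Real.rpow_mul hxpos.le]
          congr 1
          push_cast
          ring
  have keyl : ∀ j : ℕ, N ≤ j → ((lam (j+1))⁻¹) ^ 2 ≤ (cl⁻¹)^2 * ((j:ℝ)+1) ^ (2*α) := by
    intro j hj
    have hxpos : (0:ℝ) < (j:ℝ)+1 := by positivity
    have hl := (hN1 (j+1) (by omega)).1
    have hxcast : ((j+1:ℕ):ℝ) = (j:ℝ)+1 := by push_cast; ring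
    rw [hxcast] at hl
    have hlp : 0 < lam (j+1) := hpos (j+1) (by omega)
    have h0 : (0:ℝ) < cl * ((j:ℝ)+1) ^ (-α) := by positivity
    have hinv : (lam (j+1))⁻¹ ≤ cl⁻¹ * ((j:ℝ)+1) ^ α := by
      calc (lam (j+1))⁻¹ ≤ (cl * ((j:ℝ)+1) ^ (-α))⁻¹ := inv_anti₀ h0 hl
        _ = cl⁻¹ * ((j:ℝ)+1) ^ α := by
            rw [mul_inv, Real.rpow_neg hxpos.le, inv_inv]
    calc ((lam (j+1))⁻¹)^2 ≤ (cl⁻¹ * ((j:ℝ)+1) ^ α)^2 :=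
          pow_le_pow_left₀ (by positivity) hinv 2
      _ = (cl⁻¹)^2 * ((j:ℝ)+1) ^ (2*α) := by
          rw [mul_pow, ← Real.rpow_natCast (((j:ℝ)+1) ^ α) 2, ← Real.rpow_mul hxpos.le]
          congr 1
          push_cast
          ring
  have key : ∀ j : ℕ, N ≤ j → g j ≤ A * ((j:ℝ)+1) ^ s := by
    intro j hj
    have hxpos : (0:ℝ) < (j:ℝ)+1 := by positivity
    calc g j ≤ ((cl⁻¹)^2 * ((j:ℝ)+1) ^ (2*α)) * (d^2 * ((j:ℝ)+1) ^ (-(2*η))) :=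
          mul_le_mul (keyl j hj) (keyb j hj) (by positivity) (by positivity)
      _ = A * ((j:ℝ)+1) ^ s := by
          rw [hA, hsdef, show ((j:ℝ)+1) ^ (2*α-2*η)
            = ((j:ℝ)+1) ^ (2*α) * ((j:ℝ)+1) ^ (-(2*η)) from by
              rw [← Real.rpow_add hxpos]; ring_nf]
          ring
  rcases hm with ⟨hαη, hmval⟩ | ⟨hαη, hmval⟩
  · -- CASE 1 : η - 1/2 < α, m = (2η-1)/α
    have hs : -1 < s := by rw [hsdef]; linarith
    have hs1 : (0:ℝ) < s + 1 := by linarith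
    set Cs : ℝ := 1 + 1/(s+1) with hCs
    have hCs0 : 0 < Cs := by positivity
    have hm2 : m ≤ 2 := by
      rw [hmval, div_le_iff₀ hα0]; linarith
    have hm0 : 0 < m := by
      rw [hmval]; exact div_pos (by linarith) hα0
    have hK1 : 0 < A*Cs*(2:ℝ)^(s+1) := by positivity
    have hK2 : 0 < d^2*(1/(2*η-1)) :=
      mul_pos (by positivity) (one_div_pos.2 (by linarith))
    have hNRpos : (0:ℝ) < (N:ℝ) := by exact_mod_cast hN1'
    refine ⟨B + A*Cs*(2:ℝ)^(s+1) + d^2*(1/(2*η-1)) + 1,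
      add_pos_of_nonneg_of_pos (add_nonneg (add_nonneg hB0 hK1.le) hK2.le) one_pos,
      (N:ℝ)^(-α), Real.rpow_pos_of_pos hNRpos _, ?_⟩
    intro ρ hρ hρ0
    have hNρ : ρ < ((N:ℝ))^(-α) := hρ0
    have hN1R : (1:ℝ) ≤ (N:ℝ) := by exact_mod_cast hN1'
    have hρ1 : ρ < 1 :=
      lt_of_lt_of_le hNρ (Real.rpow_le_one_of_one_le_of_nonpos hN1R (by linarith))
    set r : ℝ := ρ ^ (-1/α) with hr
    have hr1 : (1:ℝ) ≤ r :=
      Real.one_le_rpow_of_pos_of_le_one_of_nonpos hρ hρ1.le (by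
        rw [neg_div, neg_nonpos]; positivity)
    set J : ℕ := ⌈r⌉₊ with hJdef
    have hr0 : (0:ℝ) < r := lt_of_lt_of_le one_pos hr1
    have hJr : r ≤ (J:ℝ) := Nat.le_ceil r
    have hzneg : -1/α ≤ 0 := by rw [neg_div, neg_nonpos]; positivity
    have hrN : (N:ℝ) ≤ r := by
      have e : ((N:ℝ)^(-α))^(-1/α) = (N:ℝ) := by
        rw [← Real.rpow_mul (Nat.cast_nonneg N),
          show (-α) * (-1/α) = 1 from by field_simp, Real.rpow_one]
      calc (N:ℝ) = ((N:ℝ)^(-α))^(-1/α) := e.symm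
        _ ≤ ρ^(-1/α) := Real.rpow_le_rpow_of_nonpos hρ hNρ.le hzneg
    have hJN : N ≤ J := by exact_mod_cast hrN.trans hJr
    have hJ1 : 1 ≤ J := le_trans hN1' hJN
    have hJR0 : (0:ℝ) < (J:ℝ) := lt_of_lt_of_le hr0 hJr
    have hJub : (J:ℝ) ≤ 2*r := by
      have h := Nat.ceil_lt_add_one hr0.le
      have : (J:ℝ) < r + 1 := h
      linarith
    set F : ℕ → ℝ := fun j => ((lam (j+1) + ρ)⁻¹) ^ 2 * (bcoef (j+1)) ^ 2 with hF
    have hFnn : ∀ j, 0 ≤ F j := fun j => hfnn ρ j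
    -- termwise tail bound
    have hFtail : ∀ j : ℕ, N ≤ j → F j ≤ (ρ⁻¹)^2 * (d^2 * ((j:ℝ)+1) ^ (-(2*η))) := by
      intro j hj
      have hlp : 0 < lam (j+1) := hpos (j+1) (by omega)
      have h1 : (lam (j+1) + ρ)⁻¹ ≤ ρ⁻¹ := inv_anti₀ hρ (by linarith)
      have h2 : ((lam (j+1) + ρ)⁻¹)^2 ≤ (ρ⁻¹)^2 :=
        pow_le_pow_left₀ (by positivity) h1 2
      calc F j ≤ (ρ⁻¹)^2 * (bcoef (j+1))^2 :=
            mul_le_mul_of_nonneg_right h2 (by positivity)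
        _ ≤ (ρ⁻¹)^2 * (d^2 * ((j:ℝ)+1) ^ (-(2*η))) :=
            mul_le_mul_of_nonneg_left (keyb j hj) (by positivity)
    have claim : ∀ n : ℕ, ∑ j ∈ Finset.range n, F j
        ≤ B + A * (Cs * (J:ℝ)^(s+1))
          + (ρ⁻¹)^2 * (d^2 * ((1/(2*η-1)) * (J:ℝ)^(1-2*η))) := by
      intro n
      set n' : ℕ := max n J with hn'
      have hJn' : J ≤ n' := le_max_right n J
      have hstep1 : (∑ j ∈ Finset.range n, F j) ≤ ∑ j ∈ Finset.range n', F j :=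
        Finset.sum_le_sum_of_subset_of_nonneg (Finset.range_mono (le_max_left _ _))
          (fun j _ _ => hFnn j)
      have split1 : ∑ j ∈ Finset.range n', F j
          = ∑ j ∈ Finset.range J, F j + ∑ j ∈ Finset.Ico J n', F j := by
        rw [Finset.range_eq_Ico, Finset.range_eq_Ico]
        exact (Finset.sum_Ico_consecutive F (Nat.zero_le J) hJn').symm
      have split2 : ∑ j ∈ Finset.range J, F j
          = ∑ j ∈ Finset.range N, F j + ∑ j ∈ Finset.Ico N J, F j := by
        rw [Finset.range_eq_Ico, Finset.range_eq_Ico]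
        exact (Finset.sum_Ico_consecutive F (Nat.zero_le N) hJN).symm
      have head1 : ∑ j ∈ Finset.range N, F j ≤ B := by
        rw [hB]
        exact Finset.sum_le_sum fun j _ => hfg ρ hρ j
      have head2 : ∑ j ∈ Finset.Ico N J, F j ≤ A * (Cs * (J:ℝ)^(s+1)) := by
        calc ∑ j ∈ Finset.Ico N J, F j
            ≤ ∑ j ∈ Finset.Ico N J, A * ((j:ℝ)+1) ^ s :=
              Finset.sum_le_sum fun j hj =>
                le_trans (hfg ρ hρ j) (key j (Finset.mem_Ico.1 hj).1)
          _ ≤ ∑ j ∈ Finset.range J, A * ((j:ℝ)+1) ^ s := by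
              apply Finset.sum_le_sum_of_subset_of_nonneg
              · rw [Finset.range_eq_Ico]
                exact Finset.Ico_subset_Ico (Nat.zero_le N) le_rfl
              · intro j _ _
                have : (0:ℝ) < (j:ℝ)+1 := by positivity
                positivity
          _ = A * ∑ j ∈ Finset.range J, ((j:ℝ)+1) ^ s := by rw [Finset.mul_sum]
          _ ≤ A * (Cs * (J:ℝ)^(s+1)) := by
              apply mul_le_mul_of_nonneg_left _ hA0.le
              rw [hCs]
              exact headSum s hs J hJ1
      have tail : ∑ j ∈ Finset.Ico J n', F j
          ≤ (ρ⁻¹)^2 * (d^2 * ((1/(2*η-1)) * (J:ℝ)^(1-2*η))) := by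
        calc ∑ j ∈ Finset.Ico J n', F j
            ≤ ∑ j ∈ Finset.Ico J n', (ρ⁻¹)^2 * (d^2 * ((j:ℝ)+1) ^ (-(2*η))) :=
              Finset.sum_le_sum fun j hj =>
                hFtail j (le_trans hJN (Finset.mem_Ico.1 hj).1)
          _ = (ρ⁻¹)^2 * (d^2 * ∑ j ∈ Finset.Ico J n', ((j:ℝ)+1) ^ (-(2*η))) := by
              rw [Finset.mul_sum, Finset.mul_sum]
          _ ≤ (ρ⁻¹)^2 * (d^2 * ((1/(2*η-1)) * (J:ℝ)^(1-2*η))) := by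
              apply mul_le_mul_of_nonneg_left _ (by positivity)
              apply mul_le_mul_of_nonneg_left _ (by positivity)
              have hrw : ∑ j ∈ Finset.Ico J n', ((j:ℝ)+1) ^ (-(2*η))
                  = ∑ i ∈ Finset.range (n' - J), ((J:ℝ)+1+i) ^ (-(2*η)) := by
                rw [Finset.sum_Ico_eq_sum_range]
                apply Finset.sum_congr rfl
                intro i _
                congr 1
                push_cast
                ring
              rw [hrw]
              have := tailSum (2*η) hη1 J hJ1 (n' - J)
              calc ∑ i ∈ Finset.range (n' - J), ((J:ℝ)+1+i) ^ (-(2*η))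
                  ≤ (1/(2*η-1)) * (J:ℝ)^(1-2*η) := this
                _ = (1/(2*η-1)) * (J:ℝ)^(1-2*η) := rfl
      calc ∑ j ∈ Finset.range n, F j ≤ ∑ j ∈ Finset.range n', F j := hstep1
        _ = ∑ j ∈ Finset.range N, F j + ∑ j ∈ Finset.Ico N J, F j
            + ∑ j ∈ Finset.Ico J n', F j := by rw [split1, split2]
        _ ≤ B + A * (Cs * (J:ℝ)^(s+1))
            + (ρ⁻¹)^2 * (d^2 * ((1/(2*η-1)) * (J:ℝ)^(1-2*η))) :=
          add_le_add (add_le_add head1 head2) tail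
    have htsum : (∑' j : ℕ, F j)
        ≤ B + A * (Cs * (J:ℝ)^(s+1))
          + (ρ⁻¹)^2 * (d^2 * ((1/(2*η-1)) * (J:ℝ)^(1-2*η))) :=
      Real.tsum_le_of_sum_range_le hFnn claim
    have hρm0 : 0 < ρ ^ m := Real.rpow_pos_of_pos hρ m
    -- the three final bounds
    have hρ2m : ρ ^ (2:ℕ) ≤ ρ ^ m := by
      rw [← Real.rpow_natCast ρ 2]
      apply Real.rpow_le_rpow_of_exponent_ge hρ hρ1.le
      exact_mod_cast hm2
    have b1 : ρ ^ 2 * B ≤ B * ρ ^ m := by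
      rw [mul_comm B (ρ ^ m)]
      exact mul_le_mul_of_nonneg_right hρ2m hB0
    have hrs : ρ ^ 2 * r ^ (s+1) = ρ ^ (2 + (-1/α)*(s+1)) := by
      rw [hr, ← Real.rpow_mul hρ.le, Real.rpow_add hρ, ← Real.rpow_natCast ρ 2]
      norm_num
    have hexp1 : 2 + (-1/α)*(s+1) = m := by
      rw [hmval, hsdef]
      field_simp
      ring
    have hJs : (J:ℝ)^(s+1) ≤ 2^(s+1) * r^(s+1) := by
      calc (J:ℝ)^(s+1) ≤ (2*r)^(s+1) :=
            Real.rpow_le_rpow (by positivity) hJub hs1.le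
        _ = 2^(s+1) * r^(s+1) := Real.mul_rpow (by norm_num) hr0.le
    have b2 : ρ ^ 2 * (A * (Cs * (J:ℝ)^(s+1))) ≤ A*Cs*(2:ℝ)^(s+1) * ρ ^ m := by
      have h1 : ρ ^ 2 * (A * (Cs * (J:ℝ)^(s+1)))
          ≤ ρ ^ 2 * (A * (Cs * (2^(s+1) * r^(s+1)))) := by
        apply mul_le_mul_of_nonneg_left _ (by positivity)
        apply mul_le_mul_of_nonneg_left _ hA0.le
        exact mul_le_mul_of_nonneg_left hJs hCs0.le
      have h2 : ρ ^ 2 * (A * (Cs * (2^(s+1) * r^(s+1))))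
          = A*Cs*(2:ℝ)^(s+1) * (ρ ^ 2 * r^(s+1)) := by ring
      rw [h2, hrs, hexp1] at h1
      exact h1
    have hJt : (J:ℝ)^(1-2*η) ≤ ρ ^ m := by
      calc (J:ℝ)^(1-2*η) ≤ r^(1-2*η) :=
            Real.rpow_le_rpow_of_nonpos hr0 hJr (by linarith)
        _ = ρ ^ m := by
            rw [hr, ← Real.rpow_mul hρ.le]
            congr 1
            rw [hmval]
            field_simp
            ring
    have b3 : d^2 * ((1/(2*η-1)) * (J:ℝ)^(1-2*η)) ≤ d^2*(1/(2*η-1)) * ρ ^ m := by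
      rw [mul_assoc]
      apply mul_le_mul_of_nonneg_left _ (by positivity)
      exact mul_le_mul_of_nonneg_left hJt (le_of_lt (one_div_pos.2 (by linarith)))
    have hsimp : ρ ^ 2 * ((ρ⁻¹)^2 * (d^2 * ((1/(2*η-1)) * (J:ℝ)^(1-2*η))))
        = d^2 * ((1/(2*η-1)) * (J:ℝ)^(1-2*η)) := by
      field_simp
    calc ρ ^ 2 * (∑' j : ℕ, F j)
        ≤ ρ ^ 2 * (B + A * (Cs * (J:ℝ)^(s+1))
            + (ρ⁻¹)^2 * (d^2 * ((1/(2*η-1)) * (J:ℝ)^(1-2*η)))) :=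
          mul_le_mul_of_nonneg_left htsum (by positivity)
      _ = ρ ^ 2 * B + ρ ^ 2 * (A * (Cs * (J:ℝ)^(s+1)))
            + ρ ^ 2 * ((ρ⁻¹)^2 * (d^2 * ((1/(2*η-1)) * (J:ℝ)^(1-2*η)))) := by ring
      _ ≤ B * ρ ^ m + A*Cs*(2:ℝ)^(s+1) * ρ ^ m + d^2*(1/(2*η-1)) * ρ ^ m := by
          rw [hsimp]
          exact add_le_add (add_le_add b1 b2) b3
      _ = (B + A*Cs*(2:ℝ)^(s+1) + d^2*(1/(2*η-1))) * ρ ^ m := by ring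
      _ ≤ (B + A*Cs*(2:ℝ)^(s+1) + d^2*(1/(2*η-1)) + 1) * ρ ^ m :=
          mul_le_mul_of_nonneg_right (le_add_of_nonneg_right zero_le_one) hρm0.le

  · -- CASE 2 : α < η - 1/2, m = 2
    set p : ℝ := 2*η - 2*α with hp
    have hp1 : 1 < p := by rw [hp]; linarith
    have hsp : s = -p := by rw [hsdef, hp]; ring
    set Cconst : ℝ := B + A * ((1/(p-1)) * (N:ℝ)^(1-p)) with hC
    have hNR : (0:ℝ) < (N:ℝ) := by exact_mod_cast hN1'
    have hC0 : 0 ≤ Cconst := by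
      have h1 : 0 ≤ A * ((1/(p-1)) * (N:ℝ)^(1-p)) :=
        mul_nonneg hA0.le (mul_nonneg (le_of_lt (one_div_pos.2 (by linarith)))
          (Real.rpow_pos_of_pos hNR _).le)
      rw [hC]
      exact add_nonneg hB0 h1
    refine ⟨Cconst + 1, by linarith, 1, one_pos, ?_⟩
    intro ρ hρ hρ1
    have claim : ∀ n : ℕ, ∑ j ∈ Finset.range n,
        ((lam (j+1) + ρ)⁻¹) ^ 2 * (bcoef (j+1)) ^ 2 ≤ Cconst := by
      intro n
      set n' : ℕ := max n N with hn'
      have hstep1 : ∑ j ∈ Finset.range n,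
          ((lam (j+1) + ρ)⁻¹) ^ 2 * (bcoef (j+1)) ^ 2
          ≤ ∑ j ∈ Finset.range n', g j := by
        calc _ ≤ ∑ j ∈ Finset.range n, g j :=
              Finset.sum_le_sum fun j _ => hfg ρ hρ j
          _ ≤ ∑ j ∈ Finset.range n', g j :=
              Finset.sum_le_sum_of_subset_of_nonneg
                (Finset.range_mono (le_max_left _ _)) (fun j _ _ => hgnn j)
      have hsplit : ∑ j ∈ Finset.range n', g j
          = B + ∑ j ∈ Finset.Ico N n', g j := by
        rw [hB, Finset.range_eq_Ico, Finset.range_eq_Ico,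
          Finset.sum_Ico_consecutive _ (Nat.zero_le N) (le_max_right n N)]
      have htail : ∑ j ∈ Finset.Ico N n', g j ≤ A * ((1/(p-1)) * (N:ℝ)^(1-p)) := by
        calc ∑ j ∈ Finset.Ico N n', g j
            ≤ ∑ j ∈ Finset.Ico N n', A * ((j:ℝ)+1) ^ s :=
              Finset.sum_le_sum fun j hj => key j (Finset.mem_Ico.1 hj).1
          _ = A * ∑ i ∈ Finset.range (n' - N), ((N:ℝ)+1+i) ^ (-p) := by
              rw [Finset.sum_Ico_eq_sum_range, ← Finset.mul_sum]
              congr 1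
              apply Finset.sum_congr rfl
              intro i _
              rw [hsp]
              congr 1
              push_cast
              ring
          _ ≤ A * ((1/(p-1)) * (N:ℝ)^(1-p)) :=
              mul_le_mul_of_nonneg_left (tailSum p hp1 N hN1' _) hA0.le
      calc _ ≤ ∑ j ∈ Finset.range n', g j := hstep1
        _ = B + ∑ j ∈ Finset.Ico N n', g j := hsplit
        _ ≤ B + A * ((1/(p-1)) * (N:ℝ)^(1-p)) := add_le_add_right htail B
        _ = Cconst := hC.symm
    have htsum : (∑' j : ℕ, ((lam (j+1) + ρ)⁻¹) ^ 2 * (bcoef (j+1)) ^ 2) ≤ Cconst :=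
      Real.tsum_le_of_sum_range_le (hfnn ρ) claim
    have hρm : ρ ^ m = ρ ^ (2:ℕ) := by
      rw [hmval, show ((2:ℝ)) = ((2:ℕ):ℝ) from by norm_num, Real.rpow_natCast]
    calc ρ ^ 2 * (∑' j : ℕ, ((lam (j+1) + ρ)⁻¹) ^ 2 * (bcoef (j+1)) ^ 2)
        ≤ ρ ^ 2 * Cconst := mul_le_mul_of_nonneg_left htsum (by positivity)
      _ ≤ (Cconst + 1) * ρ ^ m := by
          rw [hρm]
          nlinarith [sq_nonneg ρ, pow_pos hρ 2]
end

section
/- Under the decay conditions $c j^{-\alpha} \le \lambda_j \le C j^{-\alpha}$ ($\alpha > 1$) on the eigenvalues of a positive trace-class operator, there is a constant $K$ such that for all small $\rho > 0$, $\sum_{j\ge1} \lambda_j/(\lambda_j + \rho)^2 \le K \rho^{-1 - 1/\alpha}$. -/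
open Real Finset

lemma bern_aux {t β : ℝ} (ht0 : 0 ≤ t) (ht1 : t < 1) (hβ : 0 < β) :
    1 + β * t ≤ (1 - t) ^ (-β) := by
  have h1t : 0 < 1 - t := by linarith
  rcases le_or_gt β 1 with hβ1 | hβ1
  · have h2 : (1 - t) ^ β ≤ 1 - β * t := by
      have h := rpow_one_add_le_one_add_mul_self (s := -t) (p := β) (by linarith) hβ.le hβ1
      have e : (1 : ℝ) + -t = 1 - t := by ring
      rw [e] at h
      linarith [h]
    have hpos : 0 < (1 - t) ^ β := rpow_pos_of_pos h1t β
    have hmul : (1 + β * t) * ((1 - t) ^ β) ≤ 1 := by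
      nlinarith [sq_nonneg (β * t)]
    rw [rpow_neg h1t.le, ← one_div, le_div_iff₀ hpos]
    exact hmul
  · set s := t / (1 - t) with hs
    have hs0 : 0 ≤ s := div_nonneg ht0 h1t.le
    have h := one_add_mul_self_le_rpow_one_add (s := s) (p := β) (by linarith) hβ1.le
    have hts : t ≤ s := by
      rw [hs, le_div_iff₀ h1t]; nlinarith
    have e : (1 : ℝ) + s = (1 - t)⁻¹ := eq_inv_of_mul_eq_one_left (by rw [add_mul, one_mul, hs, div_mul_cancel₀ t h1t.ne']; ring)
    rw [e, inv_rpow h1t.le, ← rpow_neg h1t.le] at h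
    nlinarith

lemma tele_aux {x α : ℝ} (hx : 1 ≤ x) (hα : 1 < α) :
    (α - 1) * (x + 1) ^ (-α) ≤ x ^ (1 - α) - (x + 1) ^ (1 - α) := by
  have hx0 : 0 < x := by linarith
  have hx1 : 0 < x + 1 := by linarith
  set β := α - 1 with hβdef
  have hβ : 0 < β := by simp [hβdef]; linarith
  set t := 1 / (x + 1) with ht
  have ht0 : 0 ≤ t := by positivity
  have ht1 : t < 1 := by rw [ht, div_lt_one hx1]; linarith
  have key := bern_aux ht0 ht1 hβ
  have h1t : (1 : ℝ) - t = x / (x + 1) := by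
    rw [ht]; field_simp; ring
  rw [h1t, div_rpow hx0.le hx1.le] at key
  -- key : 1 + β * t ≤ x ^ (-β) / (x+1) ^ (-β)
  have hpw : 0 < (x + 1) ^ (-β) := rpow_pos_of_pos hx1 _
  have key2 : (1 + β * t) * (x + 1) ^ (-β) ≤ x ^ (-β) := by
    rw [← le_div_iff₀ hpw]; exact key
  have hTt : t * (x + 1) ^ (-β) = (x + 1) ^ (-α) := by
    rw [ht, one_div, ← rpow_neg_one, ← rpow_add hx1]
    congr 1
    rw [hβdef]; ring
  have e1 : x ^ (-β) = x ^ (1 - α) := by rw [hβdef]; ring_nf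
  have e2 : (x + 1) ^ (-β) = (x + 1) ^ (1 - α) := by rw [hβdef]; ring_nf
  nlinarith [key2, hTt, e1, e2]

lemma tail_aux {α : ℝ} (hα : 1 < α) {M : ℕ} (hM : 1 ≤ M) :
    (∑' j : ℕ, ((j : ℝ) + M + 1) ^ (-α)) ≤ (M : ℝ) ^ (1 - α) / (α - 1) := by
  have hα1 : 0 < α - 1 := by linarith
  apply Real.tsum_le_of_sum_range_le
  · intro n; positivity
  · intro n
    have hstep : ∀ j : ℕ, ((j : ℝ) + M + 1) ^ (-α)
        ≤ (((j : ℝ) + M) ^ (1 - α) - ((j : ℝ) + M + 1) ^ (1 - α)) / (α - 1) := by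
      intro j
      rw [le_div_iff₀ hα1]
      have hx : (1 : ℝ) ≤ (j : ℝ) + M := by
        have : (1 : ℝ) ≤ (M : ℝ) := by exact_mod_cast hM
        have : (0 : ℝ) ≤ (j : ℝ) := Nat.cast_nonneg _
        linarith
      have := tele_aux hx hα
      linarith
    calc ∑ j ∈ Finset.range n, ((j : ℝ) + M + 1) ^ (-α)
        ≤ ∑ j ∈ Finset.range n,
            ((((j : ℝ) + M) ^ (1 - α) - ((j : ℝ) + M + 1) ^ (1 - α)) / (α - 1)) :=
          Finset.sum_le_sum fun j _ => hstep j
      _ = (∑ j ∈ Finset.range n,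
            (((j : ℝ) + M) ^ (1 - α) - (((j : ℝ) + 1) + M) ^ (1 - α))) / (α - 1) := by
          rw [← Finset.sum_div]
          congr 1
          apply Finset.sum_congr rfl
          intro j _
          ring_nf
      _ = (((0 : ℝ) + M) ^ (1 - α) - ((n : ℝ) + M) ^ (1 - α)) / (α - 1) := by
          congr 1
          have := Finset.sum_range_sub' (fun j : ℕ => ((j : ℝ) + M) ^ (1 - α)) n
          simpa using this
      _ ≤ (M : ℝ) ^ (1 - α) / (α - 1) := by
          have h0 : (0 : ℝ) ≤ ((n : ℝ) + M) ^ (1 - α) := by positivity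
          rw [zero_add]
          gcongr
          linarith

set_option maxHeartbeats 1000000 in
/-- the key variance bound `∑ λ_j/(λ_j+ρ)² ≤ K ρ^{-1-1/α}`. -/
theorem stmt6 (lam : ℕ → ℝ) (α cl cu : ℝ)
    (hα : 1 < α) (hcl : 0 < cl) (hclu : cl < cu)
    (hpos : ∀ j : ℕ, 1 ≤ j → 0 < lam j)
    (hlam : ∃ N : ℕ, ∀ j : ℕ, N ≤ j →
      cl * (j:ℝ) ^ (-α) ≤ lam j ∧ lam j ≤ cu * (j:ℝ) ^ (-α)) :
    ∃ K : ℝ, ∃ ρ0 > (0:ℝ), ∀ ρ : ℝ, 0 < ρ → ρ < ρ0 →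
      (∑' j : ℕ, lam (j+1) / (lam (j+1) + ρ) ^ 2)
        ≤ K * ρ ^ (-(1 + 1/α)) := by
  obtain ⟨N, hN⟩ := hlam
  have hcu : 0 < cu := hcl.trans hclu
  have hα0 : 0 < α := by linarith
  have hα1 : 0 < α - 1 := by linarith
  set B := max N 1 with hBdef
  have hB1 : 1 ≤ B := le_max_right _ _
  have hBN : N ≤ B := le_max_left _ _
  have hBR : (1 : ℝ) ≤ (B : ℝ) := by exact_mod_cast hB1
  refine ⟨1/2 + cu / (α - 1), (B : ℝ) ^ (-α), by positivity, ?_⟩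
  intro ρ hρ hρ0
  have hP : 0 < ρ ^ (-(1 + 1/α)) := Real.rpow_pos_of_pos hρ _
  have hxpos : 0 < ρ ^ (-1/α) := Real.rpow_pos_of_pos hρ _
  have hρB : (B : ℝ) ≤ ρ ^ (-1/α) := by
    have hexp : -1/α ≤ 0 := by
      rw [neg_div]
      exact neg_nonpos.mpr (by positivity)
    have h1 : ((B:ℝ) ^ (-α)) ^ (-1/α) ≤ ρ ^ (-1/α) :=
      Real.rpow_le_rpow_of_nonpos hρ hρ0.le hexp
    have h2 : ((B:ℝ) ^ (-α)) ^ (-1/α) = (B:ℝ) := by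
      rw [← Real.rpow_mul (by positivity), show (-α) * (-1/α) = 1 by field_simp,
        Real.rpow_one]
    linarith [h1, h2.symm.le]
  set M := ⌈ρ ^ (-1/α)⌉₊ with hMdef
  have hMlo : ρ ^ (-1/α) ≤ (M : ℝ) := Nat.le_ceil _
  have hBM : B ≤ M := by
    have : (B : ℝ) ≤ (M : ℝ) := le_trans hρB hMlo
    exact_mod_cast this
  have hM1 : 1 ≤ M := le_trans hB1 hBM
  have hMhi : (M : ℝ) ≤ 2 * ρ ^ (-1/α) := by
    have h := Nat.ceil_lt_add_one (le_of_lt hxpos)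
    have hx1 : (1 : ℝ) ≤ ρ ^ (-1/α) := le_trans hBR hρB
    rw [← hMdef] at h
    linarith
  have hxj : ∀ j : ℕ, 0 < lam (j + 1) := fun j => hpos (j + 1) (Nat.succ_le_succ (Nat.zero_le _))
  have hfnn : ∀ j : ℕ, 0 ≤ lam (j + 1) / (lam (j + 1) + ρ) ^ 2 := by
    intro j
    have := hxj j
    positivity
  have hterm1 : ∀ j : ℕ, lam (j + 1) / (lam (j + 1) + ρ) ^ 2 ≤ 1 / (4 * ρ) := by
    intro j
    have hx := hxj j
    rw [div_le_div_iff₀ (by positivity) (by positivity)]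
    nlinarith [sq_nonneg (lam (j + 1) - ρ)]
  have hterm2 : ∀ k : ℕ, N ≤ k + 1 →
      lam (k + 1) / (lam (k + 1) + ρ) ^ 2 ≤ cu * ((k : ℝ) + 1) ^ (-α) / ρ ^ 2 := by
    intro k hk
    have hx := hxj k
    have hle := (hN (k + 1) hk).2
    have hcast : ((k + 1 : ℕ) : ℝ) = (k : ℝ) + 1 := by push_cast; ring
    rw [hcast] at hle
    have h1 : lam (k + 1) / (lam (k + 1) + ρ) ^ 2 ≤ lam (k + 1) / ρ ^ 2 := by
      gcongr
      nlinarith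
    have h2 : lam (k + 1) / ρ ^ 2 ≤ cu * ((k : ℝ) + 1) ^ (-α) / ρ ^ 2 := by
      gcongr
    linarith
  have hs0 : Summable (fun n : ℕ => ((n : ℝ)) ^ (-α)) :=
    Real.summable_nat_rpow.mpr (by linarith)
  have hmaj : ∀ k : ℕ, Summable (fun j : ℕ => cu * ((j : ℝ) + (k : ℝ) + 1) ^ (-α) / ρ ^ 2) := by
    intro k
    have h1 : Summable (fun j : ℕ => ((j + (k + 1) : ℕ) : ℝ) ^ (-α)) :=
      (summable_nat_add_iff (k + 1)).mpr hs0
    have h2 : ∀ j : ℕ, ((j + (k + 1) : ℕ) : ℝ) ^ (-α) = ((j : ℝ) + (k : ℝ) + 1) ^ (-α) := by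
      intro j; congr 1; push_cast; ring
    have h1' : Summable (fun j : ℕ => ((j : ℝ) + (k : ℝ) + 1) ^ (-α)) := by
      apply h1.congr h2
    exact (h1'.mul_left cu).div_const (ρ ^ 2)
  have hsum : Summable (fun j : ℕ => lam (j + 1) / (lam (j + 1) + ρ) ^ 2) := by
    apply (summable_nat_add_iff B).mp
    refine Summable.of_nonneg_of_le (fun j => hfnn (j + B)) ?_ (hmaj B)
    intro j
    have h := hterm2 (j + B) (by omega)
    have hcast : ((j + B : ℕ) : ℝ) = (j : ℝ) + (B : ℝ) := by push_cast; ring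
    rw [hcast] at h
    exact h
  have hsum1 : Summable (fun i : ℕ => lam ((i + M) + 1) / (lam ((i + M) + 1) + ρ) ^ 2) :=
    (summable_nat_add_iff M).mpr hsum
  have hsplit := Summable.sum_add_tsum_nat_add
    (f := fun j : ℕ => lam (j + 1) / (lam (j + 1) + ρ) ^ 2) M hsum
  have hhead : (∑ i ∈ Finset.range M, lam (i + 1) / (lam (i + 1) + ρ) ^ 2)
      ≤ (1/2) * ρ ^ (-(1 + 1/α)) := by
    have h1 : (∑ i ∈ Finset.range M, lam (i + 1) / (lam (i + 1) + ρ) ^ 2)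
        ≤ (M : ℝ) * (1 / (4 * ρ)) := by
      calc (∑ i ∈ Finset.range M, lam (i + 1) / (lam (i + 1) + ρ) ^ 2)
          ≤ ∑ _i ∈ Finset.range M, 1 / (4 * ρ) :=
            Finset.sum_le_sum fun i _ => hterm1 i
        _ = (M : ℝ) * (1 / (4 * ρ)) := by
            rw [Finset.sum_const, Finset.card_range, nsmul_eq_mul]
    have h2 : (M : ℝ) * (1 / (4 * ρ)) ≤ (2 * ρ ^ (-1/α)) * (1 / (4 * ρ)) := by
      gcongr
    have h3 : (2 * ρ ^ (-1/α)) * (1 / (4 * ρ)) = (1/2) * ρ ^ (-(1 + 1/α)) := by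
      rw [show -(1 + 1/α) = -1/α + (-1) by ring, Real.rpow_add hρ, Real.rpow_neg_one]
      field_simp
      ring
    linarith
  have htail : (∑' i : ℕ, lam ((i + M) + 1) / (lam ((i + M) + 1) + ρ) ^ 2)
      ≤ (cu / (α - 1)) * ρ ^ (-(1 + 1/α)) := by
    have hle : ∀ i : ℕ, lam ((i + M) + 1) / (lam ((i + M) + 1) + ρ) ^ 2
        ≤ cu * ((i : ℝ) + (M : ℝ) + 1) ^ (-α) / ρ ^ 2 := by
      intro i
      have h := hterm2 (i + M) (by omega)
      have hcast : ((i + M : ℕ) : ℝ) = (i : ℝ) + (M : ℝ) := by push_cast; ring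
      rw [hcast] at h
      exact h
    have h1 : (∑' i : ℕ, lam ((i + M) + 1) / (lam ((i + M) + 1) + ρ) ^ 2)
        ≤ ∑' i : ℕ, cu * ((i : ℝ) + (M : ℝ) + 1) ^ (-α) / ρ ^ 2 :=
      Summable.tsum_le_tsum hle hsum1 (hmaj M)
    have h2 : (∑' i : ℕ, cu * ((i : ℝ) + (M : ℝ) + 1) ^ (-α) / ρ ^ 2)
        = (cu / ρ ^ 2) * ∑' i : ℕ, ((i : ℝ) + (M : ℝ) + 1) ^ (-α) := by
      rw [← tsum_mul_left]
      congr 1; funext i; ring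
    have h3 : (∑' i : ℕ, ((i : ℝ) + (M : ℝ) + 1) ^ (-α)) ≤ (M : ℝ) ^ (1 - α) / (α - 1) :=
      tail_aux hα hM1
    have h4 : (M : ℝ) ^ (1 - α) ≤ ρ ^ ((-1/α) * (1 - α)) := by
      have h := Real.rpow_le_rpow_of_nonpos hxpos hMlo (by linarith : 1 - α ≤ 0)
      rwa [← Real.rpow_mul hρ.le] at h
    have key : ρ ^ ((-1/α) * (1 - α)) / ρ ^ (2 : ℕ) = ρ ^ (-(1 + 1/α)) := by
      rw [← Real.rpow_natCast ρ 2, ← Real.rpow_sub hρ]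
      congr 1
      push_cast
      field_simp
      ring
    have h5 : (cu / ρ ^ 2) * ((M : ℝ) ^ (1 - α) / (α - 1))
        ≤ (cu / (α - 1)) * ρ ^ (-(1 + 1/α)) := by
      have hstep : (cu / ρ ^ 2) * ((M : ℝ) ^ (1 - α) / (α - 1))
          ≤ (cu / ρ ^ 2) * (ρ ^ ((-1/α) * (1 - α)) / (α - 1)) := by
        gcongr
      have he2 : (cu / ρ ^ 2) * (ρ ^ ((-1/α) * (1 - α)) / (α - 1))
          = (cu / (α - 1)) * (ρ ^ ((-1/α) * (1 - α)) / ρ ^ (2 : ℕ)) := by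
        ring
      rw [he2, key] at hstep
      exact hstep
    calc (∑' i : ℕ, lam ((i + M) + 1) / (lam ((i + M) + 1) + ρ) ^ 2)
        ≤ (cu / ρ ^ 2) * ∑' i : ℕ, ((i : ℝ) + (M : ℝ) + 1) ^ (-α) := by
          rw [← h2]; exact h1
      _ ≤ (cu / ρ ^ 2) * ((M : ℝ) ^ (1 - α) / (α - 1)) :=
          mul_le_mul_of_nonneg_left h3 (by positivity)
      _ ≤ (cu / (α - 1)) * ρ ^ (-(1 + 1/α)) := h5
  rw [← hsplit]
  linarith
end

section
/- Under the oracle setting with $X = Y+Z$ uncorrelated, orthogonal eigenspaces, finite fourth moments, and independent scores $\langle X,\phi_j\rangle$: for any fixed $\rho > 0$, if at least one $\langle\beta,\phi_{j1}\rangle \ne 0$ for $1 \le j \le r$, then $\mathrm{MSE}(\widetilde{\beta}_{TR}) > \mathrm{MSE}(\widetilde{\beta}_{HR})$ for all sufficiently large sample size $n$. -/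
open MeasureTheory ProbabilityTheory
open scoped RealInnerProductSpace

section helpers
open scoped ENNReal
variable {H : Type*} [NormedAddCommGroup H] [InnerProductSpace ℝ H] [CompleteSpace H]

lemma aux_ortho (e : HilbertBasis ℕ ℝ H) :
    ∀ i j : ℕ, ⟪(e i : H), e j⟫ = if i = j then (1 : ℝ) else 0 :=
  orthonormal_iff_ite.mp e.orthonormal

lemma aux_summable_smul (e : HilbertBasis ℕ ℝ H) (g : ℕ → ℝ)
    (hg : Summable fun j => g j ^ 2) : Summable fun j => g j • (e j : H) := by
  have hmem : Memℓp g 2 := by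
    apply memℓp_gen
    have h : (fun j => ‖g j‖ ^ (2 : ℝ≥0∞).toReal) = fun j => g j ^ 2 := by
      funext j
      rw [ENNReal.toReal_ofNat, Real.rpow_two, Real.norm_eq_abs, sq_abs]
    rw [h]
    exact hg
  have h2 := (e.hasSum_repr_symm ⟨g, hmem⟩).summable
  exact h2.congr (fun j => rfl)

lemma aux_inner_tsum (e : HilbertBasis ℕ ℝ H) (g : ℕ → ℝ)
    (hg : Summable fun j => g j ^ 2) (k : ℕ) :
    ⟪(∑' j, g j • (e j : H)), e k⟫ = g k := by
  have hs := (aux_summable_smul e g hg).hasSum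
  have h2 := hs.mapL (innerSL ℝ (e k))
  have h3 : HasSum (fun j => if j = k then g k else 0) ⟪(e k : H), ∑' j, g j • (e j : H)⟫ := by
    convert h2 using 1
    case e'_3 => rfl
    case e'_6 => rfl
    funext j
    simp only [innerSL_apply_apply, inner_smul_right, aux_ortho e k j]
    rcases eq_or_ne j k with h | h
    · subst h; simp
    · simp [h, Ne.symm h]
  have h4 := (hasSum_ite_eq k (g k)).unique h3
  rw [real_inner_comm]
  exact h4.symm

lemma aux_inner_tsum_shift (e : HilbertBasis ℕ ℝ H) (g : ℕ → ℝ)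
    (hg : Summable fun j => g j ^ 2) (r k : ℕ) :
    ⟪(∑' j : ℕ, g (r + j) • (e (r + j) : H)), e k⟫ = if r ≤ k then g k else 0 := by
  have hsum : Summable fun j : ℕ => g (r + j) • (e (r + j) : H) :=
    (aux_summable_smul e g hg).comp_injective (add_right_injective r)
  have h2 := hsum.hasSum.mapL (innerSL ℝ (e k))
  by_cases hrk : r ≤ k
  · have h3 : HasSum (fun j : ℕ => if j = k - r then g k else 0)
        ⟪(e k : H), ∑' j : ℕ, g (r + j) • (e (r + j) : H)⟫ := by
      convert h2 using 1
      case e'_3 => rfl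
      case e'_6 => rfl
      funext j
      simp only [innerSL_apply_apply, inner_smul_right, aux_ortho e k (r + j)]
      rcases eq_or_ne j (k - r) with h | h
      · subst h
        rw [Nat.add_sub_cancel' hrk]
        simp
      · have hne : k ≠ r + j := by omega
        simp [h, hne]
    have h4 := (hasSum_ite_eq (k - r) (g k)).unique h3
    rw [real_inner_comm, if_pos hrk]
    exact h4.symm
  · have h3 : HasSum (fun _ : ℕ => (0 : ℝ))
        ⟪(e k : H), ∑' j : ℕ, g (r + j) • (e (r + j) : H)⟫ := by
      convert h2 using 1
      case e'_3 => rfl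
      case e'_6 => rfl
      funext j
      have hne : k ≠ r + j := by omega
      simp [innerSL_apply_apply, inner_smul_right, aux_ortho e k (r + j), hne]
    have h4 := hasSum_zero.unique h3
    rw [real_inner_comm, if_neg hrk]
    exact h4.symm

omit [CompleteSpace H] in
lemma aux_summable_coord (e : HilbertBasis ℕ ℝ H) (x : H) :
    Summable fun j => ⟪x, e j⟫ ^ 2 := by
  have h := e.summable_inner_mul_inner x x
  apply h.congr
  intro j
  rw [real_inner_comm x (e j), sq]

omit [CompleteSpace H] in
lemma aux_norm_sq (e : HilbertBasis ℕ ℝ H) (x : H) :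
    ‖x‖ ^ 2 = ∑' j, ⟪x, e j⟫ ^ 2 := by
  have h := e.tsum_inner_mul_inner x x
  rw [real_inner_self_eq_norm_sq] at h
  rw [← h]
  congr 1
  funext j
  rw [real_inner_comm x (e j), sq]

end helpers


set_option maxHeartbeats 2000000 in
/-- for fixed `ρ > 0`, if some `⟪β, φ_{j1}⟫ ≠ 0` (`j < r`), then
the oracle Tikhonov estimator has strictly larger MSE than the oracle hybrid
estimator for all sufficiently large sample sizes `n`. -/
theorem stmt16 {Ω H : Type*} [MeasurableSpace Ω]
    [NormedAddCommGroup H] [InnerProductSpace ℝ H] [CompleteSpace H]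
    [MeasurableSpace H] [BorelSpace H]
    (μ : Measure Ω) [IsProbabilityMeasure μ]
    (e : HilbertBasis ℕ ℝ H) (lam : ℕ → ℝ) (r : ℕ) (hr : 0 < r)
    (β : H) (ρ σ2 : ℝ) (hρ : 0 < ρ)
    (hpos : ∀ j, 0 < lam j) (hsum : Summable lam)
    (X : ℕ → Ω → H) (eps : ℕ → Ω → ℝ) (y : ℕ → Ω → ℝ)
    (hy : ∀ i ω, y i ω = ⟪X i ω, β⟫ + eps i ω)
    -- i.i.d. sequence
    (hmeas : ∀ i, Measurable fun ω => (X i ω, eps i ω))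
    (hiid : ∀ i, Measure.map (fun ω => (X i ω, eps i ω)) μ
        = Measure.map (fun ω => (X 0 ω, eps 0 ω)) μ)
    (hindep : iIndepFun
        (fun i ω => (X i ω, eps i ω)) μ)
    -- noise: centered, variance σ², independent of the covariate
    (heps0 : ∀ i, ∫ ω, eps i ω ∂μ = 0)
    (hepsV : ∀ i, ∫ ω, (eps i ω) ^ 2 ∂μ = σ2)
    (hepsInd : ∀ i, IndepFun (eps i) (X i) μ)
    -- scores: independent across j, centered, variance lam j, finite 4th moments
    (hscoreIndep : ∀ i, iIndepFun
        (fun j ω => ⟪X i ω, e j⟫) μ)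
    (hscore0 : ∀ i j, ∫ ω, ⟪X i ω, e j⟫ ∂μ = 0)
    (hscoreV : ∀ i j, ∫ ω, (⟪X i ω, e j⟫) ^ 2 ∂μ = lam j)
    (hscore4 : ∀ i j, Integrable (fun ω => (⟪X i ω, e j⟫) ^ 4) μ)
    (hX4 : ∀ i, Integrable (fun ω => ‖X i ω‖ ^ 4) μ)
    -- the estimators at sample size n
    (Chat TR HR : ℕ → Ω → H)
    (hChat : ∀ n ω, Chat n ω = (n : ℝ)⁻¹ • ∑ i ∈ Finset.range n, y i ω • X i ω)
    (hTR : ∀ n ω, TR n ω = ∑' j, ((lam j + ρ)⁻¹ * ⟪Chat n ω, e j⟫) • e j)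
    (hHR : ∀ n ω, HR n ω =
      (∑ j ∈ Finset.range r, ((lam j)⁻¹ * ⟪Chat n ω, e j⟫) • e j)
        + ∑' j : ℕ, ((lam (r + j) + ρ)⁻¹ * ⟪Chat n ω, e (r + j)⟫) • e (r + j))
    (hTRint : ∀ n, Integrable (fun ω => ‖TR n ω - β‖ ^ 2) μ)
    (hHRint : ∀ n, Integrable (fun ω => ‖HR n ω - β‖ ^ 2) μ)
    -- at least one leading coefficient of β is non-zero
    (hβ : ∃ j, j < r ∧ ⟪β, e j⟫ ≠ 0) :
    ∃ N : ℕ, ∀ n, N ≤ n →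
      (∫ ω, ‖HR n ω - β‖ ^ 2 ∂μ) < ∫ ω, ‖TR n ω - β‖ ^ 2 ∂μ := by
  classical
  obtain ⟨j₀, hj₀r, hbj₀⟩ := hβ
  -- basic measurability
  have hXm : ∀ i, Measurable (X i) := fun i => measurable_fst.comp (hmeas i)
  have hem : ∀ i, Measurable (eps i) := fun i => measurable_snd.comp (hmeas i)
  have hinm : ∀ v : H, Measurable fun x : H => ⟪x, v⟫ := fun v =>
    (continuous_id.inner continuous_const).measurable
  have hξm : ∀ i j, Measurable fun ω => ⟪X i ω, e j⟫ := fun i j => (hinm (e j)).comp (hXm i)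
  have hym : ∀ i, Measurable (y i) := by
    intro i
    have h : y i = fun ω => ⟪X i ω, β⟫ + eps i ω := funext (hy i)
    rw [h]; exact (((hinm β).comp (hXm i)).add (hem i))
  have hfm : ∀ i j, Measurable fun ω => y i ω * ⟪X i ω, e j⟫ := fun i j =>
    (hym i).mul (hξm i j)
  -- expansion of the coordinates of Chat
  have hcs : ∀ n ω j, ⟪Chat n ω, e j⟫
      = (n : ℝ)⁻¹ * ∑ i ∈ Finset.range n, y i ω * ⟪X i ω, e j⟫ := by
    intro n ω j
    rw [hChat, real_inner_smul_left, sum_inner]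
    congr 1
    exact Finset.sum_congr rfl fun i _ => real_inner_smul_left _ _ _
  have hcm : ∀ n j, Measurable fun ω => ⟪Chat n ω, e j⟫ := by
    intro n j
    have h : (fun ω => ⟪Chat n ω, e j⟫)
        = fun ω => (n : ℝ)⁻¹ * ∑ i ∈ Finset.range n, y i ω * ⟪X i ω, e j⟫ :=
      funext fun ω => hcs n ω j
    rw [h]
    exact (Finset.measurable_sum _ fun i _ => hfm i j).const_mul _
  -- summability of the TR coefficients
  have hsumTR : ∀ n ω, Summable fun j => ((lam j + ρ)⁻¹ * ⟪Chat n ω, e j⟫) ^ 2 := by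
    intro n ω
    apply Summable.of_nonneg_of_le (fun j => sq_nonneg _) _
      ((aux_summable_coord e (Chat n ω)).mul_left (ρ⁻¹ ^ 2))
    intro j
    rw [mul_pow]
    apply mul_le_mul_of_nonneg_right _ (sq_nonneg _)
    have h1 : (lam j + ρ)⁻¹ ≤ ρ⁻¹ := by
      apply inv_anti₀ hρ; linarith [le_of_lt (hpos j)]
    have h0 : (0:ℝ) ≤ (lam j + ρ)⁻¹ := inv_nonneg.mpr (by linarith [hpos j])
    exact pow_le_pow_left₀ h0 h1 2
  -- coordinates of TR and HR
  set d : ℕ → ℝ := fun j => if j < r then (lam j)⁻¹ else (lam j + ρ)⁻¹ with hd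
  have hcoordTR : ∀ n ω k, ⟪TR n ω, e k⟫ = (lam k + ρ)⁻¹ * ⟪Chat n ω, e k⟫ := by
    intro n ω k
    rw [hTR]
    exact aux_inner_tsum e _ (hsumTR n ω) k
  have hcoordHR : ∀ n ω k, ⟪HR n ω, e k⟫ = d k * ⟪Chat n ω, e k⟫ := by
    intro n ω k
    rw [hHR, inner_add_left]
    have h1 : ⟪(∑ j ∈ Finset.range r, ((lam j)⁻¹ * ⟪Chat n ω, e j⟫) • (e j : H)), e k⟫
        = if k < r then (lam k)⁻¹ * ⟪Chat n ω, e k⟫ else 0 := by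
      rw [sum_inner]
      have h2 : ∀ j ∈ Finset.range r, ⟪((lam j)⁻¹ * ⟪Chat n ω, e j⟫) • (e j : H), e k⟫
          = if j = k then (lam k)⁻¹ * ⟪Chat n ω, e k⟫ else 0 := by
        intro j _
        rw [real_inner_smul_left, aux_ortho e j k]
        rcases eq_or_ne j k with h | h
        · subst h; simp
        · simp [h]
      rw [Finset.sum_congr rfl h2, Finset.sum_ite_eq' (Finset.range r) k]
      simp [Finset.mem_range]
    have h3 := aux_inner_tsum_shift e
      (fun j => (lam j + ρ)⁻¹ * ⟪Chat n ω, e j⟫) (hsumTR n ω) r k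
    rw [h1, h3, hd]
    by_cases hk : k < r
    · simp [hk, not_le.mpr hk]
    · simp [hk, not_lt.mp hk]
  have hcoordTRb : ∀ n ω k, ⟪TR n ω - β, e k⟫
      = (lam k + ρ)⁻¹ * ⟪Chat n ω, e k⟫ - ⟪β, e k⟫ := by
    intro n ω k; rw [inner_sub_left, hcoordTR]
  have hcoordHRb : ∀ n ω k, ⟪HR n ω - β, e k⟫
      = d k * ⟪Chat n ω, e k⟫ - ⟪β, e k⟫ := by
    intro n ω k; rw [inner_sub_left, hcoordHR]
  -- pointwise expansion of the difference of squared errors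
  have hpt : ∀ n ω, ‖TR n ω - β‖ ^ 2 - ‖HR n ω - β‖ ^ 2
      = ∑ j ∈ Finset.range r,
        (((lam j + ρ)⁻¹ * ⟪Chat n ω, e j⟫ - ⟪β, e j⟫) ^ 2
          - (d j * ⟪Chat n ω, e j⟫ - ⟪β, e j⟫) ^ 2) := by
    intro n ω
    rw [aux_norm_sq e (TR n ω - β), aux_norm_sq e (HR n ω - β)]
    have hF : Summable fun j => ⟪TR n ω - β, e j⟫ ^ 2 := aux_summable_coord e _
    have hG : Summable fun j => ⟪HR n ω - β, e j⟫ ^ 2 := aux_summable_coord e _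
    rw [← Summable.tsum_sub hF hG]
    rw [tsum_eq_sum (s := Finset.range r) ?_]
    · exact Finset.sum_congr rfl fun j _ => by rw [hcoordTRb, hcoordHRb]
    · intro j hj
      rw [hcoordTRb, hcoordHRb]
      have hjr : ¬ j < r := fun h => hj (Finset.mem_range.mpr h)
      have hdj : d j = (lam j + ρ)⁻¹ := if_neg hjr
      rw [hdj]; ring
  -- integrability of per-coordinate terms
  have hFint : ∀ n j, Integrable
      (fun ω => ((lam j + ρ)⁻¹ * ⟪Chat n ω, e j⟫ - ⟪β, e j⟫) ^ 2) μ := by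
    intro n j
    apply Integrable.mono' (hTRint n)
      ((((hcm n j).const_mul _).sub measurable_const).pow_const 2).aestronglyMeasurable
    filter_upwards with ω
    simp only [Pi.sub_apply]
    rw [Real.norm_eq_abs, abs_of_nonneg (sq_nonneg _), ← hcoordTRb n ω j]
    have h1 := abs_real_inner_le_norm (TR n ω - β) (e j)
    rw [e.orthonormal.1 j, mul_one] at h1
    calc ⟪TR n ω - β, e j⟫ ^ 2 = |⟪TR n ω - β, e j⟫| ^ 2 := (sq_abs _).symm
      _ ≤ ‖TR n ω - β‖ ^ 2 := pow_le_pow_left₀ (abs_nonneg _) h1 2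
  have hGint : ∀ n j, Integrable
      (fun ω => (d j * ⟪Chat n ω, e j⟫ - ⟪β, e j⟫) ^ 2) μ := by
    intro n j
    apply Integrable.mono' (hHRint n)
      ((((hcm n j).const_mul _).sub measurable_const).pow_const 2).aestronglyMeasurable
    filter_upwards with ω
    simp only [Pi.sub_apply]
    rw [Real.norm_eq_abs, abs_of_nonneg (sq_nonneg _), ← hcoordHRb n ω j]
    have h1 := abs_real_inner_le_norm (HR n ω - β) (e j)
    rw [e.orthonormal.1 j, mul_one] at h1
    calc ⟪HR n ω - β, e j⟫ ^ 2 = |⟪HR n ω - β, e j⟫| ^ 2 := (sq_abs _).symm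
      _ ≤ ‖HR n ω - β‖ ^ 2 := pow_le_pow_left₀ (abs_nonneg _) h1 2
  -- the basic random variable y 0 * ξ_j is in L²
  have haρ : ∀ j, (0:ℝ) < lam j + ρ := fun j => by linarith [hpos j]
  have hc1 : ∀ j ω, ⟪Chat 1 ω, e j⟫ = y 0 ω * ⟪X 0 ω, e j⟫ := by
    intro j ω; rw [hcs 1 ω j]; simp
  have hfMem0 : ∀ j, MemLp (fun ω => y 0 ω * ⟪X 0 ω, e j⟫) 2 μ := by
    intro j
    have h1 : Integrable
        (fun ω => ((lam j + ρ)⁻¹ * (y 0 ω * ⟪X 0 ω, e j⟫) - ⟪β, e j⟫) ^ 2) μ := by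
      have h0 := hFint 1 j
      apply h0.congr
      filter_upwards with ω
      rw [hc1 j ω]
    have h2 : MemLp (fun ω => (lam j + ρ)⁻¹ * (y 0 ω * ⟪X 0 ω, e j⟫) - ⟪β, e j⟫) 2 μ :=
      (memLp_two_iff_integrable_sq
        (((hfm 0 j).const_mul _).sub measurable_const).aestronglyMeasurable).mpr h1
    have h3 := (h2.add (memLp_const (⟪β, e j⟫))).const_mul (lam j + ρ)
    have h4 : (fun ω => (lam j + ρ) *
        (((lam j + ρ)⁻¹ * (y 0 ω * ⟪X 0 ω, e j⟫) - ⟪β, e j⟫) + ⟪β, e j⟫))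
        = fun ω => y 0 ω * ⟪X 0 ω, e j⟫ := by
      funext ω
      rw [sub_add_cancel, ← mul_assoc, mul_inv_cancel₀ (ne_of_gt (haρ j)), one_mul]
    rw [← h4]
    exact h3
  -- transfer to all i by identical distribution
  have hgc : ∀ j, Continuous (fun p : H × ℝ => (⟪p.1, β⟫ + p.2) * ⟪p.1, e j⟫) := by
    intro j
    exact ((continuous_fst.inner continuous_const).add continuous_snd).mul
      (continuous_fst.inner continuous_const)
  have hfg : ∀ i j, (fun ω => y i ω * ⟪X i ω, e j⟫)
      = (fun p : H × ℝ => (⟪p.1, β⟫ + p.2) * ⟪p.1, e j⟫) ∘ (fun ω => (X i ω, eps i ω)) := by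
    intro i j; funext ω; simp [Function.comp, hy i ω]
  have hfMem : ∀ i j, MemLp (fun ω => y i ω * ⟪X i ω, e j⟫) 2 μ := by
    intro i j
    rw [hfg i j, ← memLp_map_measure_iff (hgc j).aestronglyMeasurable (hmeas i).aemeasurable,
      hiid i, memLp_map_measure_iff (hgc j).aestronglyMeasurable (hmeas 0).aemeasurable,
      ← hfg 0 j]
    exact hfMem0 j
  have hInt1 : ∀ i j, ∫ ω, y i ω * ⟪X i ω, e j⟫ ∂μ = ∫ ω, y 0 ω * ⟪X 0 ω, e j⟫ ∂μ := by
    intro i j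
    have h1 : ∀ i' : ℕ, ∫ ω, y i' ω * ⟪X i' ω, e j⟫ ∂μ
        = ∫ p, (⟪p.1, β⟫ + p.2) * ⟪p.1, e j⟫ ∂(Measure.map (fun ω => (X i' ω, eps i' ω)) μ) := by
      intro i'
      rw [integral_map (hmeas i').aemeasurable (hgc j).aestronglyMeasurable]
      exact integral_congr_ae (Filter.Eventually.of_forall fun ω => by simp [hy i' ω])
    rw [h1 i, h1 0, hiid i]
  have hInt2 : ∀ i j, ∫ ω, (y i ω * ⟪X i ω, e j⟫) ^ 2 ∂μ
      = ∫ ω, (y 0 ω * ⟪X 0 ω, e j⟫) ^ 2 ∂μ := by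
    intro i j
    have hgc2 : Continuous (fun p : H × ℝ => ((⟪p.1, β⟫ + p.2) * ⟪p.1, e j⟫) ^ 2) :=
      (hgc j).pow 2
    have h1 : ∀ i' : ℕ, ∫ ω, (y i' ω * ⟪X i' ω, e j⟫) ^ 2 ∂μ
        = ∫ p, ((⟪p.1, β⟫ + p.2) * ⟪p.1, e j⟫) ^ 2
            ∂(Measure.map (fun ω => (X i' ω, eps i' ω)) μ) := by
      intro i'
      rw [integral_map (hmeas i').aemeasurable hgc2.aestronglyMeasurable]
      exact integral_congr_ae (Filter.Eventually.of_forall fun ω => by simp [hy i' ω])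
    rw [h1 i, h1 0, hiid i]
  have hVarEq : ∀ i j, variance (fun ω => y i ω * ⟪X i ω, e j⟫) μ
      = variance (fun ω => y 0 ω * ⟪X 0 ω, e j⟫) μ := by
    intro i j
    rw [variance_eq_sub (hfMem i j), variance_eq_sub (hfMem 0 j)]
    simp only [Pi.pow_apply]
    rw [hInt1 i j, hInt2 i j]
  -- independence of the summands
  have hfind : ∀ j, iIndepFun
      (fun i ω => y i ω * ⟪X i ω, e j⟫) μ := by
    intro j
    have h1 := hindep.comp
      (fun _ : ℕ => (fun p : H × ℝ => (⟪p.1, β⟫ + p.2) * ⟪p.1, e j⟫))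
      (fun _ => (hgc j).measurable)
    have h2 : (fun i ω => y i ω * ⟪X i ω, e j⟫)
        = fun i => (fun p : H × ℝ => (⟪p.1, β⟫ + p.2) * ⟪p.1, e j⟫)
          ∘ (fun ω => (X i ω, eps i ω)) := funext fun i => hfg i j
    rw [h2]
    exact h1
  -- moments of the coordinates of Chat
  set v : ℕ → ℝ := fun j => variance (fun ω => y 0 ω * ⟪X 0 ω, e j⟫) μ with hv
  have hcInt : ∀ n j, 1 ≤ n →
      ∫ ω, ⟪Chat n ω, e j⟫ ∂μ = ∫ ω, y 0 ω * ⟪X 0 ω, e j⟫ ∂μ := by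
    intro n j hn
    have hne : (n:ℝ) ≠ 0 := Nat.cast_ne_zero.mpr (by omega)
    rw [show (fun ω => ⟪Chat n ω, e j⟫)
        = fun ω => (n:ℝ)⁻¹ * ∑ i ∈ Finset.range n, y i ω * ⟪X i ω, e j⟫ from
      funext fun ω => hcs n ω j]
    rw [integral_const_mul, integral_finset_sum _
      (fun i _ => (hfMem i j).integrable one_le_two)]
    rw [Finset.sum_congr rfl (fun i _ => hInt1 i j), Finset.sum_const, Finset.card_range,
      nsmul_eq_mul, ← mul_assoc, inv_mul_cancel₀ hne, one_mul]
  have hcMem : ∀ n j, MemLp (fun ω => ⟪Chat n ω, e j⟫) 2 μ := by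
    intro n j
    have h1 : MemLp (fun ω => ∑ i ∈ Finset.range n, y i ω * ⟪X i ω, e j⟫) 2 μ := by
      have h0 := memLp_finset_sum' (Finset.range n) (f := fun i ω => y i ω * ⟪X i ω, e j⟫)
        (fun i _ => hfMem i j)
      have h0' : (∑ i ∈ Finset.range n, fun ω => y i ω * ⟪X i ω, e j⟫)
          = fun ω => ∑ i ∈ Finset.range n, y i ω * ⟪X i ω, e j⟫ := by
        funext ω; simp
      rwa [h0'] at h0
    have h2 := h1.const_mul ((n:ℝ)⁻¹)
    rw [show (fun ω => ⟪Chat n ω, e j⟫)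
        = fun ω => (n:ℝ)⁻¹ * ∑ i ∈ Finset.range n, y i ω * ⟪X i ω, e j⟫ from
      funext fun ω => hcs n ω j]
    exact h2
  have hcVar : ∀ n j, variance (fun ω => ⟪Chat n ω, e j⟫) μ = ((n:ℝ)⁻¹) ^ 2 * (n * v j) := by
    intro n j
    rw [show (fun ω => ⟪Chat n ω, e j⟫)
        = fun ω => (n:ℝ)⁻¹ * ∑ i ∈ Finset.range n, y i ω * ⟪X i ω, e j⟫ from
      funext fun ω => hcs n ω j]
    rw [variance_const_mul]
    congr 1
    have h1 : (fun ω => ∑ i ∈ Finset.range n, y i ω * ⟪X i ω, e j⟫)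
        = ∑ i ∈ Finset.range n, (fun ω => y i ω * ⟪X i ω, e j⟫) := by
      funext ω; simp
    rw [h1, IndepFun.variance_sum (fun i _ => hfMem i j)
      (fun i _ k _ hik => (hfind j).indepFun hik)]
    rw [Finset.sum_congr rfl (fun i _ => hVarEq i j), Finset.sum_const, Finset.card_range,
      nsmul_eq_mul]
  have hcSq : ∀ n j, 1 ≤ n → ∫ ω, ⟪Chat n ω, e j⟫ ^ 2 ∂μ
      = (∫ ω, y 0 ω * ⟪X 0 ω, e j⟫ ∂μ) ^ 2 + v j * (n:ℝ)⁻¹ := by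
    intro n j hn
    have hne : (n:ℝ) ≠ 0 := Nat.cast_ne_zero.mpr (by omega)
    have h1 := variance_eq_sub (hcMem n j)
    simp only [Pi.pow_apply] at h1
    rw [hcVar n j, hcInt n j hn] at h1
    have h2 : ((n:ℝ)⁻¹) ^ 2 * (n * v j) = v j * (n:ℝ)⁻¹ := by
      field_simp
    linarith [h1, h2]
  -- the mean of y 0 * ξ_j equals lam j * ⟪β, e j⟫
  have hX2int : Integrable (fun ω => ‖X 0 ω‖ ^ 2) μ := by
    apply Integrable.mono' ((hX4 0).add (integrable_const 1))
      ((hXm 0).norm.pow_const 2).aestronglyMeasurable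
    filter_upwards with ω
    rw [Real.norm_eq_abs, abs_of_nonneg (by positivity)]
    simp only [Pi.add_apply]
    nlinarith [sq_nonneg (‖X 0 ω‖ ^ 2 - 1), sq_nonneg (‖X 0 ω‖)]
  have hnormξ : ∀ (ω : Ω) (j : ℕ), |⟪X 0 ω, e j⟫| ≤ ‖X 0 ω‖ := by
    intro ω j
    have h := abs_real_inner_le_norm (X 0 ω) (e j)
    rwa [e.orthonormal.1 j, mul_one] at h
  have hm : ∀ j, ∫ ω, y 0 ω * ⟪X 0 ω, e j⟫ ∂μ = lam j * ⟪β, e j⟫ := by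
    intro j
    have hptb : ∀ (w : H) (ω : Ω), |⟪X 0 ω, w⟫ * ⟪X 0 ω, e j⟫| ≤ ‖w‖ * ‖X 0 ω‖ ^ 2 := by
      intro w ω
      rw [abs_mul]
      have h1 := abs_real_inner_le_norm (X 0 ω) w
      have h2 := hnormξ ω j
      have h3 : |⟪X 0 ω, w⟫| * |⟪X 0 ω, e j⟫| ≤ (‖X 0 ω‖ * ‖w‖) * ‖X 0 ω‖ :=
        mul_le_mul h1 h2 (abs_nonneg _) (by positivity)
      calc |⟪X 0 ω, w⟫| * |⟪X 0 ω, e j⟫| ≤ (‖X 0 ω‖ * ‖w‖) * ‖X 0 ω‖ := h3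
        _ = ‖w‖ * ‖X 0 ω‖ ^ 2 := by ring
    have hint_inner : ∀ w : H, Integrable (fun ω => ⟪X 0 ω, w⟫ * ⟪X 0 ω, e j⟫) μ := by
      intro w
      apply Integrable.mono' (hX2int.const_mul ‖w‖)
        (((hinm w).comp (hXm 0)).mul (hξm 0 j)).aestronglyMeasurable
      filter_upwards with ω
      rw [Real.norm_eq_abs]
      exact hptb w ω
    have hbound : ∀ w : H, |∫ ω, ⟪X 0 ω, w⟫ * ⟪X 0 ω, e j⟫ ∂μ|
        ≤ ‖w‖ * ∫ ω, ‖X 0 ω‖ ^ 2 ∂μ := by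
      intro w
      have ha1 : |∫ ω, ⟪X 0 ω, w⟫ * ⟪X 0 ω, e j⟫ ∂μ|
          ≤ ∫ ω, |⟪X 0 ω, w⟫ * ⟪X 0 ω, e j⟫| ∂μ := by
        have hni := norm_integral_le_integral_norm (f := fun ω => ⟪X 0 ω, w⟫ * ⟪X 0 ω, e j⟫) (μ := μ)
        simpa [Real.norm_eq_abs, abs_mul] using hni
      have ha2 : ∫ ω, |⟪X 0 ω, w⟫ * ⟪X 0 ω, e j⟫| ∂μ ≤ ∫ ω, ‖w‖ * ‖X 0 ω‖ ^ 2 ∂μ := by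
        apply integral_mono (hint_inner w).abs (hX2int.const_mul ‖w‖)
        intro ω
        exact hptb w ω
      have ha2' : ∫ ω, |⟪X 0 ω, w⟫ * ⟪X 0 ω, e j⟫| ∂μ
          = ∫ ω, |⟪X 0 ω, w⟫| * |⟪X 0 ω, e j⟫| ∂μ := by
        exact integral_congr_ae (Filter.Eventually.of_forall fun ω => abs_mul _ _)
      have ha3 : ∫ ω, ‖w‖ * ‖X 0 ω‖ ^ 2 ∂μ = ‖w‖ * ∫ ω, ‖X 0 ω‖ ^ 2 ∂μ := integral_const_mul _ _
      rw [ha2'] at ha2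
      linarith
    have hcross : ∀ k, k ≠ j → ∫ ω, ⟪X 0 ω, e k⟫ * ⟪X 0 ω, e j⟫ ∂μ = 0 := by
      intro k hk
      have hind := (hscoreIndep 0).indepFun hk
      have h1 := IndepFun.integral_mul_eq_mul_integral hind (hξm 0 k).aestronglyMeasurable (hξm 0 j).aestronglyMeasurable
      have h2 : ∫ ω, ⟪X 0 ω, e k⟫ * ⟪X 0 ω, e j⟫ ∂μ
          = (∫ ω, ⟪X 0 ω, e k⟫ ∂μ) * ∫ ω, ⟪X 0 ω, e j⟫ ∂μ := h1
      rw [h2, hscore0 0 k, zero_mul]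
    -- partial sums of β
    have h1 : HasSum (fun k => ⟪β, e k⟫ • (e k : H)) β := by
      have h0 := e.hasSum_repr β
      have he : (fun k => (e.repr β k : ℝ) • (e k : H)) = fun k => ⟪β, e k⟫ • (e k : H) := by
        funext k
        rw [e.repr_apply_apply, real_inner_comm]
      rwa [he] at h0
    -- value on partial sums
    have hξξint : ∀ k : ℕ, Integrable (fun ω => ⟪X 0 ω, e k⟫ * ⟪X 0 ω, e j⟫) μ :=
      fun k => hint_inner (e k)
    have hTj : ∀ N, j < N →
        ∫ ω, ⟪X 0 ω, ∑ k ∈ Finset.range N, ⟪β, e k⟫ • (e k : H)⟫ * ⟪X 0 ω, e j⟫ ∂μ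
          = lam j * ⟪β, e j⟫ := by
      intro N hN
      have hexp : (fun ω => ⟪X 0 ω, ∑ k ∈ Finset.range N, ⟪β, e k⟫ • (e k : H)⟫ * ⟪X 0 ω, e j⟫)
          = fun ω => ∑ k ∈ Finset.range N, ⟪β, e k⟫ * (⟪X 0 ω, e k⟫ * ⟪X 0 ω, e j⟫) := by
        funext ω
        rw [inner_sum, Finset.sum_mul]
        congr 1
        funext k
        rw [real_inner_smul_right]
        ring
      rw [hexp, integral_finset_sum _ (fun k _ => (hξξint k).const_mul _)]
      have h2 : ∀ k ∈ Finset.range N, ∫ ω, ⟪β, e k⟫ * (⟪X 0 ω, e k⟫ * ⟪X 0 ω, e j⟫) ∂μ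
          = if k = j then lam j * ⟪β, e j⟫ else 0 := by
        intro k _
        rw [integral_const_mul]
        rcases eq_or_ne k j with h | h
        · subst h
          have hsq : (fun ω => ⟪X 0 ω, e k⟫ * ⟪X 0 ω, e k⟫) = fun ω => ⟪X 0 ω, e k⟫ ^ 2 := by
            funext ω; ring
          rw [hsq, hscoreV 0 k, if_pos rfl]
          ring
        · rw [hcross k h, mul_zero, if_neg h]
      rw [Finset.sum_congr rfl h2, Finset.sum_ite_eq' (Finset.range N) j
        (fun _ => lam j * ⟪β, e j⟫), if_pos (Finset.mem_range.mpr hN)]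
    -- pass to the limit
    have hIβ : Integrable (fun ω => ⟪X 0 ω, β⟫ * ⟪X 0 ω, e j⟫) μ := hint_inner β
    have hTt : Filter.Tendsto
        (fun N => ‖β - ∑ k ∈ Finset.range N, ⟪β, e k⟫ • (e k : H)‖ * ∫ ω, ‖X 0 ω‖ ^ 2 ∂μ)
        Filter.atTop (nhds 0) := by
      have h2 := h1.tendsto_sum_nat
      have h3 : Filter.Tendsto
          (fun N => β - ∑ k ∈ Finset.range N, ⟪β, e k⟫ • (e k : H)) Filter.atTop (nhds 0) := by
        have h4 := Filter.Tendsto.sub (tendsto_const_nhds (x := β)) h2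
        simpa using h4
      have h5 := h3.norm
      simp only [norm_zero] at h5
      simpa using h5.mul_const (∫ ω, ‖X 0 ω‖ ^ 2 ∂μ)
    have hdiff : ∀ N, j < N →
        |(∫ ω, ⟪X 0 ω, β⟫ * ⟪X 0 ω, e j⟫ ∂μ) - lam j * ⟪β, e j⟫|
          ≤ ‖β - ∑ k ∈ Finset.range N, ⟪β, e k⟫ • (e k : H)‖ * ∫ ω, ‖X 0 ω‖ ^ 2 ∂μ := by
      intro N hN
      rw [← hTj N hN,
        ← integral_sub hIβ (hint_inner (∑ k ∈ Finset.range N, ⟪β, e k⟫ • (e k : H)))]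
      have hsub : (fun ω => ⟪X 0 ω, β⟫ * ⟪X 0 ω, e j⟫
            - ⟪X 0 ω, ∑ k ∈ Finset.range N, ⟪β, e k⟫ • (e k : H)⟫ * ⟪X 0 ω, e j⟫)
          = fun ω => ⟪X 0 ω, β - ∑ k ∈ Finset.range N, ⟪β, e k⟫ • (e k : H)⟫ * ⟪X 0 ω, e j⟫ := by
        funext ω
        rw [inner_sub_right]
        ring
      rw [hsub]
      exact hbound _
    have habs : |(∫ ω, ⟪X 0 ω, β⟫ * ⟪X 0 ω, e j⟫ ∂μ) - lam j * ⟪β, e j⟫| ≤ 0 := by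
      apply ge_of_tendsto hTt
      filter_upwards [Filter.eventually_gt_atTop j] with N hN
      exact hdiff N hN
    have hXβξ : ∫ ω, ⟪X 0 ω, β⟫ * ⟪X 0 ω, e j⟫ ∂μ = lam j * ⟪β, e j⟫ :=
      sub_eq_zero.mp (abs_nonpos_iff.mp habs)
    -- the noise part has mean zero
    have hepsξint : Integrable (fun ω => eps 0 ω * ⟪X 0 ω, e j⟫) μ := by
      have h2 : (fun ω => eps 0 ω * ⟪X 0 ω, e j⟫)
          = fun ω => y 0 ω * ⟪X 0 ω, e j⟫ - ⟪X 0 ω, β⟫ * ⟪X 0 ω, e j⟫ := by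
        funext ω; rw [hy 0 ω]; ring
      rw [h2]
      exact ((hfMem0 j).integrable one_le_two).sub hIβ
    have hepsξ : ∫ ω, eps 0 ω * ⟪X 0 ω, e j⟫ ∂μ = 0 := by
      have hind : IndepFun (eps 0) (fun ω => ⟪X 0 ω, e j⟫) μ :=
        (hepsInd 0).comp measurable_id (hinm (e j))
      have h2 := IndepFun.integral_mul_eq_mul_integral hind (hem 0).aestronglyMeasurable (hξm 0 j).aestronglyMeasurable
      have h3 : ∫ ω, eps 0 ω * ⟪X 0 ω, e j⟫ ∂μ
          = (∫ ω, eps 0 ω ∂μ) * ∫ ω, ⟪X 0 ω, e j⟫ ∂μ := h2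
      rw [h3, heps0 0, zero_mul]
    have hh : (fun ω => y 0 ω * ⟪X 0 ω, e j⟫)
        = fun ω => ⟪X 0 ω, β⟫ * ⟪X 0 ω, e j⟫ + eps 0 ω * ⟪X 0 ω, e j⟫ := by
      funext ω; rw [hy 0 ω]; ring
    rw [hh, integral_add hIβ hepsξint, hXβξ, hepsξ, add_zero]
  -- per-coordinate integral formula
  have hIj : ∀ j, j < r → ∀ n : ℕ, 1 ≤ n →
      ∫ ω, (((lam j + ρ)⁻¹ * ⟪Chat n ω, e j⟫ - ⟪β, e j⟫) ^ 2
        - (d j * ⟪Chat n ω, e j⟫ - ⟪β, e j⟫) ^ 2) ∂μ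
      = ⟪β, e j⟫ ^ 2 * ρ ^ 2 / (lam j + ρ) ^ 2
        + ((((lam j + ρ)⁻¹) ^ 2 - ((lam j)⁻¹) ^ 2) * v j) * (n:ℝ)⁻¹ := by
    intro j hjr n hn
    have hdj : d j = (lam j)⁻¹ := by simp only [hd]; rw [if_pos hjr]
    have hptw : (fun ω => ((lam j + ρ)⁻¹ * ⟪Chat n ω, e j⟫ - ⟪β, e j⟫) ^ 2
          - (d j * ⟪Chat n ω, e j⟫ - ⟪β, e j⟫) ^ 2)
        = fun ω => (((lam j + ρ)⁻¹) ^ 2 - ((lam j)⁻¹) ^ 2) * ⟪Chat n ω, e j⟫ ^ 2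
          - (2 * ((lam j + ρ)⁻¹ - (lam j)⁻¹) * ⟪β, e j⟫) * ⟪Chat n ω, e j⟫ := by
      funext ω; rw [hdj]; ring
    rw [hptw, integral_sub ((hcMem n j).integrable_sq.const_mul _)
      (((hcMem n j).integrable one_le_two).const_mul _),
      integral_const_mul, integral_const_mul, hcSq n j hn, hcInt n j hn, hm j]
    have hl : lam j ≠ 0 := (hpos j).ne'
    have hlρ : lam j + ρ ≠ 0 := (haρ j).ne'
    field_simp
    ring
  -- total difference of MSEs
  have htotal : ∀ n : ℕ, 1 ≤ n →
      (∫ ω, ‖TR n ω - β‖ ^ 2 ∂μ) - ∫ ω, ‖HR n ω - β‖ ^ 2 ∂μ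
      = (∑ j ∈ Finset.range r, ⟪β, e j⟫ ^ 2 * ρ ^ 2 / (lam j + ρ) ^ 2)
        + (∑ j ∈ Finset.range r, (((lam j + ρ)⁻¹) ^ 2 - ((lam j)⁻¹) ^ 2) * v j) * (n:ℝ)⁻¹ := by
    intro n hn
    rw [← integral_sub (hTRint n) (hHRint n)]
    rw [show (fun ω => ‖TR n ω - β‖ ^ 2 - ‖HR n ω - β‖ ^ 2)
        = fun ω => ∑ j ∈ Finset.range r,
          (((lam j + ρ)⁻¹ * ⟪Chat n ω, e j⟫ - ⟪β, e j⟫) ^ 2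
            - (d j * ⟪Chat n ω, e j⟫ - ⟪β, e j⟫) ^ 2) from funext fun ω => hpt n ω]
    have hintsub : ∀ j, Integrable (fun ω =>
        (((lam j + ρ)⁻¹ * ⟪Chat n ω, e j⟫ - ⟪β, e j⟫) ^ 2
          - (d j * ⟪Chat n ω, e j⟫ - ⟪β, e j⟫) ^ 2)) μ :=
      fun j => (hFint n j).sub (hGint n j)
    rw [integral_finset_sum _ (fun j _ => hintsub j)]
    rw [Finset.sum_congr rfl (fun j hj => hIj j (Finset.mem_range.mp hj) n hn)]
    rw [Finset.sum_add_distrib, ← Finset.sum_mul]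
  set K : ℝ := ∑ j ∈ Finset.range r, ⟪β, e j⟫ ^ 2 * ρ ^ 2 / (lam j + ρ) ^ 2 with hK
  set C : ℝ := ∑ j ∈ Finset.range r, (((lam j + ρ)⁻¹) ^ 2 - ((lam j)⁻¹) ^ 2) * v j with hC
  have hKpos : 0 < K := by
    apply Finset.sum_pos' (fun j _ => by positivity)
    refine ⟨j₀, Finset.mem_range.mpr hj₀r, ?_⟩
    have hb2 : 0 < ⟪β, e j₀⟫ ^ 2 :=
      lt_of_le_of_ne (sq_nonneg _) (Ne.symm (pow_ne_zero 2 hbj₀))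
    have hden : 0 < (lam j₀ + ρ) ^ 2 := pow_pos (haρ j₀) 2
    positivity
  -- choose N large enough
  refine ⟨max 1 (Nat.ceil (|C| / K) + 1), fun n hn => ?_⟩
  have hn1 : 1 ≤ n := le_trans (le_max_left _ _) hn
  have hnc : Nat.ceil (|C| / K) + 1 ≤ n := le_trans (le_max_right _ _) hn
  have hnR : (0:ℝ) < n := by exact_mod_cast hn1
  have h1 : |C| / K < n := by
    have h2 := Nat.le_ceil (|C| / K)
    have h3 : ((Nat.ceil (|C| / K) : ℝ)) + 1 ≤ n := by exact_mod_cast hnc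
    linarith
  have h2 : |C| < K * n := by
    rw [div_lt_iff₀ hKpos] at h1
    linarith [h1, mul_comm (n:ℝ) K]
  have h3 : |C * (n:ℝ)⁻¹| < K := by
    rw [abs_mul, abs_inv, Nat.abs_cast, ← div_eq_mul_inv, div_lt_iff₀ hnR]
    linarith
  have h4 := htotal n hn1
  have h5 : 0 < K + C * (n:ℝ)⁻¹ := by
    have h6 := neg_abs_le (C * (n:ℝ)⁻¹)
    linarith
  linarith [h4, h5]
end
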